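/- With r* = (Σᵢ m̂ⁱ)/(Σᵢ mⁱ), the fairness remainder R(σ) = (1/n)Σᵢ(m̂ⁱ - r*·mⁱ)(uⁱ_ν(ŝ⋆) - E_σ[uⁱ_ν]) satisfies R(σ) ≤ (2K/n)Σᵢ |m̂ⁱ - r*·mⁱ|·d_wⁱ, where d_wⁱ = m(uⁱ_ν - μ^w) and K satisfies ‖v‖_∞ ≤ K·m(v) for all v. The proof uses that Σᵢ(m̂ⁱ - r*·mⁱ) = 0 for this choice of r*, and that |uⁱ_ν(s) - μ^w(s)| ≤ K·d_wⁱ pointwise. -/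

import Mathlib

open Finset

def IsDist {d : ℕ} (σ : Fin d → ℝ) : Prop := (∀ s, 0 ≤ σ s) ∧ ∑ s, σ s = 1

def expv {d : ℕ} (σ u : Fin d → ℝ) : ℝ := ∑ s, σ s * u s

theorem stmt14 {n d : ℕ} (hn : 0 < n)
    (m : (Fin d → ℝ) → ℝ) (K : ℝ)
    (hK : ∀ v : Fin d → ℝ, ‖v‖ ≤ K * m v)
    (uν : Fin n → Fin d → ℝ) (mag mhat : Fin n → ℝ)
    (hmag : ∀ i, 0 < mag i) (hmhat : ∀ i, 0 < mhat i)
    -- ŝ⋆ is a pure profile maximising principal welfare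
    (uhat : Fin n → Fin d → ℝ) (shat : Fin d)
    (hstar : ∀ σ : Fin d → ℝ, IsDist σ →
      (n : ℝ)⁻¹ * ∑ i, expv σ (uhat i) ≤ (n : ℝ)⁻¹ * ∑ i, uhat i shat) :
    ∀ σ : Fin d → ℝ, IsDist σ →
      -- with r* = (Σᵢ m̂ⁱ)/(Σᵢ mⁱ), the fairness remainder R(σ) satisfies
      (n : ℝ)⁻¹ * ∑ i, (mhat i - ((∑ j, mhat j) / (∑ j, mag j)) * mag i) *
          (uν i shat - expv σ (uν i)) ≤
        (2 * K / n) * ∑ i, |mhat i - ((∑ j, mhat j) / (∑ j, mag j)) * mag i| *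
          m (uν i - (∑ j, mag j)⁻¹ • (∑ j, mag j • uν j)) := by
  intro σ hσ
  have hne : Nonempty (Fin n) := ⟨⟨0, hn⟩⟩
  set S : ℝ := ∑ j, mag j with hSdef
  have hS : 0 < S := Finset.sum_pos (fun j _ => hmag j) Finset.univ_nonempty
  set μ : Fin d → ℝ := S⁻¹ • (∑ j, mag j • uν j) with hμ
  set c : Fin n → ℝ := fun i => mhat i - ((∑ j, mhat j) / S) * mag i with hcdef
  have hc : ∑ i, c i = 0 := by
    simp only [hcdef, Finset.sum_sub_distrib, ← Finset.mul_sum]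
    field_simp
    rw [← hSdef]; ring
  -- pointwise bound on v i := uν i - μ
  set v : Fin n → Fin d → ℝ := fun i => uν i - μ with hv
  have hexp : ∀ i, expv σ (uν i) - expv σ μ = expv σ (v i) := by
    intro i
    simp only [expv, hv, ← Finset.sum_sub_distrib, Pi.sub_apply]
    exact Finset.sum_congr rfl (fun s _ => by ring)
  have hvs : ∀ (i : Fin n) (s : Fin d), |v i s| ≤ K * m (v i) := by
    intro i s
    calc |v i s| = ‖v i s‖ := rfl
      _ ≤ ‖v i‖ := norm_le_pi_norm (v i) s
      _ ≤ K * m (v i) := hK (v i)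
  have hexpbound : ∀ i, |expv σ (v i)| ≤ K * m (v i) := by
    intro i
    calc |expv σ (v i)| ≤ ∑ s, |σ s * v i s| := Finset.abs_sum_le_sum_abs _ _
      _ = ∑ s, σ s * |v i s| := by
          exact Finset.sum_congr rfl (fun s _ => by
            rw [abs_mul, abs_of_nonneg (hσ.1 s)])
      _ ≤ ∑ s, σ s * (K * m (v i)) := by
          exact Finset.sum_le_sum (fun s _ =>
            mul_le_mul_of_nonneg_left (hvs i s) (hσ.1 s))
      _ = K * m (v i) := by rw [← Finset.sum_mul, hσ.2, one_mul]
  have key : ∑ i, c i * (uν i shat - expv σ (uν i))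
      = ∑ i, c i * (v i shat - expv σ (v i)) := by
    have h1 : ∀ i, c i * (v i shat - expv σ (v i))
        = c i * (uν i shat - expv σ (uν i)) - c i * (μ shat - expv σ μ) := by
      intro i
      rw [← hexp i]
      simp only [hv, Pi.sub_apply]
      ring
    rw [Finset.sum_congr rfl (fun i _ => h1 i), Finset.sum_sub_distrib,
      ← Finset.sum_mul, hc, zero_mul, sub_zero]
  have hterm : ∀ i, c i * (v i shat - expv σ (v i)) ≤ |c i| * (2 * K * m (v i)) := by
    intro i
    calc c i * (v i shat - expv σ (v i)) ≤ |c i * (v i shat - expv σ (v i))| :=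
          le_abs_self _
      _ = |c i| * |v i shat - expv σ (v i)| := abs_mul _ _
      _ ≤ |c i| * (|v i shat| + |expv σ (v i)|) :=
          mul_le_mul_of_nonneg_left (abs_sub _ _) (abs_nonneg _)
      _ ≤ |c i| * (K * m (v i) + K * m (v i)) :=
          mul_le_mul_of_nonneg_left (add_le_add (hvs i shat) (hexpbound i)) (abs_nonneg _)
      _ = |c i| * (2 * K * m (v i)) := by ring
  have hsum : ∑ i, c i * (uν i shat - expv σ (uν i))
      ≤ 2 * K * ∑ i, |c i| * m (v i) := by
    rw [key, Finset.mul_sum]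
    exact Finset.sum_le_sum (fun i _ => by
      calc c i * (v i shat - expv σ (v i)) ≤ |c i| * (2 * K * m (v i)) := hterm i
        _ = 2 * K * (|c i| * m (v i)) := by ring)
  have hninv : (0:ℝ) ≤ (n : ℝ)⁻¹ := by positivity
  calc (n : ℝ)⁻¹ * ∑ i, c i * (uν i shat - expv σ (uν i))
      ≤ (n : ℝ)⁻¹ * (2 * K * ∑ i, |c i| * m (v i)) :=
        mul_le_mul_of_nonneg_left hsum hninv
    _ = (2 * K / n) * ∑ i, |c i| * m (v i) := by ring
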